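/- arXiv:1306.6566 — 3 statements merged into one kernel-verified Lean document; each statement's English description precedes it below -/
import Mathlib

section
/- For nonnegative integers j, k, and M, the integral ∫_0^∞ x^j e^{-x} L_M^{(k)}(x) dx equals (j!/M!) · (k - j)_M, where (a)_M is the Pochhammer symbol. -/
open MeasureTheory Real Finset Polynomial

/-- The generalized Laguerre polynomial of degree `M` with parameter `ρ`. -/
noncomputable def laguerre (ρ : ℝ) (M : ℕ) (z : ℝ) : ℝ :=
  ((ascPochhammer ℝ M).eval (ρ + 1) / (Nat.factorial M : ℝ)) *
    ∑ j ∈ Finset.range (M + 1),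
      ((ascPochhammer ℝ j).eval (-(M : ℝ)) / (ascPochhammer ℝ j).eval (ρ + 1)) *
        z ^ j / (Nat.factorial j : ℝ)

lemma integrableOn_pow_exp_aux (n : ℕ) :
    IntegrableOn (fun x : ℝ => x ^ n * Real.exp (-x)) (Set.Ioi 0) := by
  have h := Real.GammaIntegral_convergent (s := (n : ℝ) + 1) (by positivity)
  refine h.congr_fun (fun x hx => ?_) measurableSet_Ioi
  simp only [add_sub_cancel_right, Real.rpow_natCast]
  ring

lemma integral_pow_exp_aux (n : ℕ) :
    ∫ x in Set.Ioi (0 : ℝ), x ^ n * Real.exp (-x) = (Nat.factorial n : ℝ) := by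
  have h := Real.Gamma_eq_integral (s := (n : ℝ) + 1) (by positivity)
  rw [Real.Gamma_nat_eq_factorial] at h
  rw [h]
  refine setIntegral_congr_fun measurableSet_Ioi (fun x hx => ?_)
  rw [add_sub_cancel_right, Real.rpow_natCast]
  ring

lemma desc_smeval_eq_eval (n : ℕ) (r : ℝ) :
    (descPochhammer ℤ n).smeval r = (descPochhammer ℝ n).eval r := by
  rw [← Polynomial.aeval_eq_smeval, Polynomial.aeval_def, Polynomial.eval₂_eq_eval_map,
    descPochhammer_map]

lemma vandermonde_aux (j k M : ℕ) :
    (ascPochhammer ℝ M).eval ((k : ℝ) - j) =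
      ∑ i ∈ Finset.range (M + 1), (M.choose i : ℝ) *
        ((descPochhammer ℝ i).eval (-(j : ℝ) - 1) *
          (descPochhammer ℝ (M - i)).eval ((k : ℝ) + M)) := by
  have hV := Ring.descPochhammer_smeval_add (R := ℝ) (r := -(j : ℝ) - 1) (s := (k : ℝ) + M) M
    (Commute.all _ _)
  rw [Finset.Nat.sum_antidiagonal_eq_sum_range_succ_mk] at hV
  simp only [desc_smeval_eq_eval] at hV
  rw [descPochhammer_eval_eq_ascPochhammer] at hV
  have harg : -(j : ℝ) - 1 + ((k : ℝ) + M) - M + 1 = (k : ℝ) - j := by ring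
  rw [harg] at hV
  simpa using hV

lemma key_sum (j k M : ℕ) :
    ∑ i ∈ Finset.range (M + 1),
      (ascPochhammer ℝ M).eval ((k : ℝ) + 1) *
        ((ascPochhammer ℝ i).eval (-(M : ℝ)) / (ascPochhammer ℝ i).eval ((k : ℝ) + 1)) *
          (Nat.factorial (j + i) : ℝ) / (Nat.factorial i : ℝ) =
      (Nat.factorial j : ℝ) * (ascPochhammer ℝ M).eval ((k : ℝ) - j) := by
  rw [vandermonde_aux j k M, Finset.mul_sum]
  refine Finset.sum_congr rfl (fun i hi => ?_)
  have hiM : i ≤ M := Nat.lt_succ_iff.mp (Finset.mem_range.mp hi)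
  -- cast all Pochhammer evaluations to factorials
  have e1 : (ascPochhammer ℝ i).eval (-(M : ℝ)) =
      (-1 : ℝ) ^ i * (M.descFactorial i : ℝ) := by
    rw [ascPochhammer_eval_neg_eq_descPochhammer, descPochhammer_eval_eq_descFactorial]
  have e2 : (ascPochhammer ℝ i).eval ((k : ℝ) + 1) = ((k + 1).ascFactorial i : ℝ) := by
    rw [show ((k : ℝ) + 1) = ((k + 1 : ℕ) : ℝ) by push_cast; ring,
      ← ascPochhammer_eval_cast, ascPochhammer_nat_eq_ascFactorial]
  have e3 : (ascPochhammer ℝ M).eval ((k : ℝ) + 1) = ((k + 1).ascFactorial M : ℝ) := by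
    rw [show ((k : ℝ) + 1) = ((k + 1 : ℕ) : ℝ) by push_cast; ring,
      ← ascPochhammer_eval_cast, ascPochhammer_nat_eq_ascFactorial]
  have e4 : (descPochhammer ℝ i).eval (-(j : ℝ) - 1) =
      (-1 : ℝ) ^ i * ((j + 1).ascFactorial i : ℝ) := by
    have h := ascPochhammer_eval_neg_eq_descPochhammer (R := ℝ) (-(j : ℝ) - 1) i
    rw [neg_sub, sub_neg_eq_add] at h
    have h2 : (ascPochhammer ℝ i).eval ((j : ℝ) + 1) = ((j + 1).ascFactorial i : ℝ) := by
      rw [show ((j : ℝ) + 1) = ((j + 1 : ℕ) : ℝ) by push_cast; ring,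
        ← ascPochhammer_eval_cast, ascPochhammer_nat_eq_ascFactorial]
    rw [show ((j:ℝ) + 1) = 1 + (j:ℝ) by ring] at h2
    rw [h2] at h
    have : ((-1 : ℝ) ^ i) * ((-1 : ℝ) ^ i) = 1 := by
      rw [← pow_add]; exact Even.neg_one_pow ⟨i, rfl⟩
    calc (descPochhammer ℝ i).eval (-(j : ℝ) - 1)
        = ((-1 : ℝ) ^ i * (-1 : ℝ) ^ i) * (descPochhammer ℝ i).eval (-(j : ℝ) - 1) := by
          rw [this, one_mul]
      _ = (-1 : ℝ) ^ i * ((j + 1).ascFactorial i : ℝ) := by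
          rw [mul_assoc, ← h]
  have e5 : (descPochhammer ℝ (M - i)).eval ((k : ℝ) + M) =
      ((k + M).descFactorial (M - i) : ℝ) := by
    rw [show ((k : ℝ) + M) = ((k + M : ℕ) : ℝ) by push_cast; ring,
      descPochhammer_eval_eq_descFactorial]
  rw [e1, e2, e3, e4, e5]
  -- turn the natural-number quantities into factorial ratios
  have fk : (Nat.factorial k : ℝ) ≠ 0 := Nat.cast_ne_zero.mpr (Nat.factorial_ne_zero k)
  have fMi : (Nat.factorial (M - i) : ℝ) ≠ 0 := Nat.cast_ne_zero.mpr (Nat.factorial_ne_zero _)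
  have fj : (Nat.factorial j : ℝ) ≠ 0 := Nat.cast_ne_zero.mpr (Nat.factorial_ne_zero j)
  have fi : (Nat.factorial i : ℝ) ≠ 0 := Nat.cast_ne_zero.mpr (Nat.factorial_ne_zero i)
  have fki : (Nat.factorial (k + i) : ℝ) ≠ 0 := Nat.cast_ne_zero.mpr (Nat.factorial_ne_zero _)
  have hA : ((k + 1).ascFactorial M : ℝ) = (Nat.factorial (k + M) : ℝ) / (Nat.factorial k : ℝ) := by
    rw [eq_div_iff fk, mul_comm]
    exact_mod_cast congrArg (Nat.cast (R := ℝ)) (Nat.factorial_mul_ascFactorial k M)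
  have hC : ((k + 1).ascFactorial i : ℝ) = (Nat.factorial (k + i) : ℝ) / (Nat.factorial k : ℝ) := by
    rw [eq_div_iff fk, mul_comm]
    exact_mod_cast congrArg (Nat.cast (R := ℝ)) (Nat.factorial_mul_ascFactorial k i)
  have hD : ((j + 1).ascFactorial i : ℝ) = (Nat.factorial (j + i) : ℝ) / (Nat.factorial j : ℝ) := by
    rw [eq_div_iff fj, mul_comm]
    exact_mod_cast congrArg (Nat.cast (R := ℝ)) (Nat.factorial_mul_ascFactorial j i)
  have hB : (M.descFactorial i : ℝ) = (Nat.factorial M : ℝ) / (Nat.factorial (M - i) : ℝ) := by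
    rw [eq_div_iff fMi, mul_comm]
    exact_mod_cast congrArg (Nat.cast (R := ℝ)) (Nat.factorial_mul_descFactorial hiM)
  have hE : ((k + M).descFactorial (M - i) : ℝ) =
      (Nat.factorial (k + M) : ℝ) / (Nat.factorial (k + i) : ℝ) := by
    rw [eq_div_iff fki, mul_comm]
    have hsub : (k + M) - (M - i) = k + i := by omega
    have := Nat.factorial_mul_descFactorial (show M - i ≤ k + M by omega)
    rw [hsub] at this
    exact_mod_cast congrArg (Nat.cast (R := ℝ)) this
  have hCh : (M.choose i : ℝ) =
      (Nat.factorial M : ℝ) / ((Nat.factorial i : ℝ) * (Nat.factorial (M - i) : ℝ)) :=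
    Nat.cast_choose ℝ hiM
  rw [hA, hB, hC, hD, hE, hCh]
  field_simp

/-- `∫_0^∞ x^j e^{-x} L_M^{(k)}(x) dx = (j!/M!) (k-j)_M`. -/
theorem integral_pow_exp_laguerre (j k M : ℕ) :
    ∫ x in Set.Ioi (0 : ℝ), x ^ j * Real.exp (-x) * laguerre (k : ℝ) M x =
      ((Nat.factorial j : ℝ) / (Nat.factorial M : ℝ)) *
        (ascPochhammer ℝ M).eval ((k : ℝ) - (j : ℝ)) := by
  have hM : (Nat.factorial M : ℝ) ≠ 0 := Nat.cast_ne_zero.mpr (Nat.factorial_ne_zero M)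
  set C : ℕ → ℝ := fun i =>
    (ascPochhammer ℝ M).eval ((k : ℝ) + 1) / (Nat.factorial M : ℝ) *
      ((ascPochhammer ℝ i).eval (-(M : ℝ)) / (ascPochhammer ℝ i).eval ((k : ℝ) + 1)) /
        (Nat.factorial i : ℝ) with hC
  have hpt : ∀ x ∈ Set.Ioi (0 : ℝ),
      x ^ j * Real.exp (-x) * laguerre (k : ℝ) M x =
        ∑ i ∈ Finset.range (M + 1), C i * (x ^ (j + i) * Real.exp (-x)) := by
    intro x _
    unfold laguerre
    rw [Finset.mul_sum, Finset.mul_sum]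
    refine Finset.sum_congr rfl (fun i _ => ?_)
    rw [hC, pow_add]
    ring
  rw [setIntegral_congr_fun measurableSet_Ioi hpt,
    integral_finset_sum _ (fun i _ => ((integrableOn_pow_exp_aux (j + i)).const_mul (C i)))]
  simp_rw [integral_const_mul, integral_pow_exp_aux]
  have hkey := key_sum j k M
  calc ∑ i ∈ Finset.range (M + 1), C i * (Nat.factorial (j + i) : ℝ)
      = (∑ i ∈ Finset.range (M + 1),
          (ascPochhammer ℝ M).eval ((k : ℝ) + 1) *
            ((ascPochhammer ℝ i).eval (-(M : ℝ)) / (ascPochhammer ℝ i).eval ((k : ℝ) + 1)) *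
              (Nat.factorial (j + i) : ℝ) / (Nat.factorial i : ℝ)) / (Nat.factorial M : ℝ) := by
        rw [Finset.sum_div]
        refine Finset.sum_congr rfl (fun i _ => ?_)
        rw [hC]
        ring
    _ = ((Nat.factorial j : ℝ) * (ascPochhammer ℝ M).eval ((k : ℝ) - j)) /
          (Nat.factorial M : ℝ) := by rw [hkey]
    _ = ((Nat.factorial j : ℝ) / (Nat.factorial M : ℝ)) *
          (ascPochhammer ℝ M).eval ((k : ℝ) - (j : ℝ)) := by ring
end

section
/- Kummer's transformation: for the confluent hypergeometric function of the first kind, {}_1F_1(a; c; z) = e^z · {}_1F_1(c - a; c; -z), for all complex z and parameters a, c with c not a nonpositive integer. -/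
/-- The confluent hypergeometric function of the first kind `₁F₁(a; c; z)`. -/
noncomputable def oneF1 (a c z : ℂ) : ℂ :=
  ∑' k : ℕ, ((ascPochhammer ℂ k).eval a / (ascPochhammer ℂ k).eval c) *
    z ^ k / (Nat.factorial k : ℂ)

noncomputable def P (k : ℕ) (x : ℂ) : ℂ := (ascPochhammer ℂ k).eval x

@[simp] lemma P_zero (x : ℂ) : P 0 x = 1 := by simp [P]

lemma P_succ (k : ℕ) (x : ℂ) : P (k+1) x = P k x * (x + k) := by
  simp [P, ascPochhammer_succ_eval]

lemma P_succ_left (k : ℕ) (x : ℂ) : P (k+1) x = x * P k (x+1) := by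
  simp [P, ascPochhammer_succ_left, Polynomial.eval_comp, Polynomial.eval_mul]

lemma P_mul (j m : ℕ) (x : ℂ) : P j x * P m (x + j) = P (j+m) x := by
  have := congrArg (Polynomial.eval x) (ascPochhammer_mul (S := ℂ) j m)
  simpa [P, Polynomial.eval_comp, Polynomial.eval_mul] using this

lemma chu (b : ℂ) : ∀ (n : ℕ) (c : ℂ),
    ∑ j ∈ Finset.range (n+1),
      (-1 : ℂ)^j * (n.choose j : ℂ) * P j b * P (n-j) (c + j) = P n (c - b) := by
  intro n
  induction n with
  | zero => intro c; simp
  | succ n ih =>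
    intro c
    have hB : ∀ i : ℕ, i ≤ n → (c + i) * P (n-i) (c + i + 1) = P (n-i) (c + i) * (c + n) := by
      intro i hi
      have h1 : (c + i) * P (n-i) (c + i + 1) = P (n-i+1) (c+i) := (P_succ_left (n-i) (c+i)).symm
      have h2 : P (n-i+1) (c+i) = P (n-i) (c+i) * (c + i + (n-i : ℕ)) := P_succ (n-i) (c+i)
      rw [h1, h2, Nat.cast_sub hi]; ring_nf
    have hsplit : ∀ i ∈ Finset.range (n+1),
        (-1 : ℂ)^(i+1) * ((n+1).choose (i+1) : ℂ) * P (i+1) b * P (n+1-(i+1)) (c + (i+1 : ℕ))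
        = (-1 : ℂ)^(i+1) * (n.choose (i+1) : ℂ) * P (i+1) b * P (n+1-(i+1)) (c + (i+1 : ℕ))
          + (-(c + n)) * ((-1 : ℂ)^i * (n.choose i : ℂ) * P i b * P (n-i) (c + i))
          + (c - b) * ((-1 : ℂ)^i * (n.choose i : ℂ) * P i b * P (n-i) ((c+1) + i)) := by
      intro i hi
      have hi' : i ≤ n := by simpa using Nat.lt_succ_iff.mp (Finset.mem_range.mp hi)
      have hch : (((n+1).choose (i+1) : ℕ) : ℂ) = (n.choose i : ℂ) + (n.choose (i+1) : ℂ) := by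
        rw [Nat.choose_succ_succ]; push_cast; ring
      have hs : n + 1 - (i+1) = n - i := by omega
      have hcast : (((i+1 : ℕ)) : ℂ) = (i : ℂ) + 1 := by push_cast; ring
      rw [hs, hch, hcast, P_succ i b]
      rw [show c + ((i:ℂ) + 1) = c + (i:ℂ) + 1 by ring,
          show (c + 1) + (i : ℂ) = c + (i:ℂ) + 1 by ring]
      have hb := hB i hi'
      linear_combination (-((-1:ℂ)^i) * (n.choose i : ℂ) * P i b) * hb
    rw [Finset.sum_range_succ']
    rw [Finset.sum_congr rfl hsplit]
    rw [Finset.sum_add_distrib, Finset.sum_add_distrib, ← Finset.mul_sum, ← Finset.mul_sum, ih c]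
    have ih2 : ∑ i ∈ Finset.range (n+1),
        (-1 : ℂ)^i * (n.choose i : ℂ) * P i b * P (n-i) ((c+1) + i) = P n (c + 1 - b) := ih (c+1)
    rw [ih2]
    -- Now handle the first sum plus the j=0 term
    have hA : (∑ i ∈ Finset.range (n+1),
        (-1 : ℂ)^(i+1) * (n.choose (i+1) : ℂ) * P (i+1) b * P (n+1-(i+1)) (c + (i+1 : ℕ)))
        + (-1 : ℂ)^0 * ((n+1).choose 0 : ℂ) * P 0 b * P (n+1-0) (c + (0 : ℕ))
        = (c + n) * P n (c - b) := by
      have e1 : (∑ i ∈ Finset.range (n+1),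
          (-1 : ℂ)^(i+1) * (n.choose (i+1) : ℂ) * P (i+1) b * P (n+1-(i+1)) (c + (i+1 : ℕ)))
          + (-1 : ℂ)^0 * ((n+1).choose 0 : ℂ) * P 0 b * P (n+1-0) (c + (0 : ℕ))
          = ∑ j ∈ Finset.range (n+2),
            (-1 : ℂ)^j * (n.choose j : ℂ) * P j b * P (n+1-j) (c + j) := by
        conv_rhs => rw [Finset.sum_range_succ']
        congr 1
        simp
      rw [e1, Finset.sum_range_succ]
      have : (n.choose (n+1) : ℂ) = 0 := by simp
      rw [this]
      have e2 : ∀ j ∈ Finset.range (n+1),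
          (-1 : ℂ)^j * (n.choose j : ℂ) * P j b * P (n+1-j) (c + j)
          = (c + n) * ((-1 : ℂ)^j * (n.choose j : ℂ) * P j b * P (n-j) (c + j)) := by
        intro j hj
        have hj' : j ≤ n := by simpa using Nat.lt_succ_iff.mp (Finset.mem_range.mp hj)
        have hs : n + 1 - j = (n - j) + 1 := by omega
        rw [hs, P_succ (n-j) (c + j)]
        have : (c + j) + ((n - j : ℕ) : ℂ) = c + n := by
          rw [Nat.cast_sub hj']; ring
        rw [this]; ring
      rw [Finset.sum_congr rfl e2, ← Finset.mul_sum, ih c]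
      ring
    rw [show c + 1 - b = c - b + 1 by ring]
    linear_combination hA - P_succ_left n (c - b)

lemma key_sum_s7 (a c z : ℂ) (hPc : ∀ k, P k c ≠ 0) (n : ℕ) :
    ∑ k ∈ Finset.range (n+1),
      z ^ k / (k.factorial : ℂ) *
        (P (n-k) (c-a) / P (n-k) c * (-z) ^ (n-k) / ((n-k).factorial : ℂ))
    = P n a / P n c * z ^ n / (n.factorial : ℂ) := by
  rw [← Finset.sum_range_reflect]
  have step : ∀ j ∈ Finset.range (n+1),
      z ^ (n + 1 - 1 - j) / ((n + 1 - 1 - j).factorial : ℂ) *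
        (P (n-(n + 1 - 1 - j)) (c-a) / P (n-(n + 1 - 1 - j)) c *
          (-z) ^ (n-(n + 1 - 1 - j)) / ((n-(n + 1 - 1 - j)).factorial : ℂ))
      = ((-1 : ℂ)^j * (n.choose j : ℂ) * P j (c-a) * P (n-j) (c + j))
          * (z ^ n / ((n.factorial : ℂ) * P n c)) := by
    intro j hj
    have hj' : j ≤ n := by simpa using Nat.lt_succ_iff.mp (Finset.mem_range.mp hj)
    have h1 : n + 1 - 1 - j = n - j := by omega
    have h2 : n - (n - j) = j := by omega
    rw [h1, h2]
    have hp : P j c * P (n-j) (c + j) = P n c := by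
      have := P_mul j (n-j) c
      rwa [show j + (n - j) = n by omega] at this
    have hq : P (n-j) (c + j) ≠ 0 := by
      intro h
      exact hPc n (by rw [← hp, h, mul_zero])
    have hfac : ((n.choose j : ℕ) : ℂ) * (j.factorial : ℂ) * ((n-j).factorial : ℂ)
        = (n.factorial : ℂ) := by
      exact_mod_cast congrArg (Nat.cast (R := ℂ)) (Nat.choose_mul_factorial_mul_factorial hj')
    have hpow : z ^ (n-j) * z ^ j = z ^ n := by
      rw [← pow_add, show n - j + j = n by omega]
    have hneg : (-z) ^ j = (-1 : ℂ)^j * z ^ j := by rw [neg_pow]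
    rw [hneg]
    have hfj : (j.factorial : ℂ) ≠ 0 := Nat.cast_ne_zero.mpr j.factorial_ne_zero
    have hfnj : (((n-j).factorial : ℕ) : ℂ) ≠ 0 := Nat.cast_ne_zero.mpr (n-j).factorial_ne_zero
    have hfn : ((n.factorial : ℕ) : ℂ) ≠ 0 := Nat.cast_ne_zero.mpr n.factorial_ne_zero
    have h3 : P j c ≠ 0 := hPc j
    have h4 : P n c ≠ 0 := hPc n
    field_simp
    linear_combination (P j (c-a) * (n.factorial : ℂ) * P n c) * hpow
      - (P j (c-a) * z^n * (n.factorial : ℂ)) * hp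
      - (P j (c-a) * z^n * P j c * P (n-j) (c + (j:ℂ))) * hfac
  rw [Finset.sum_congr rfl step, ← Finset.sum_mul, chu (c - a) n c,
      show c - (c - a) = a by ring]
  field_simp

lemma summable_norm_term (a c z : ℂ) (hPc : ∀ k, P k c ≠ 0) (hc : ∀ n : ℕ, c ≠ -(n : ℂ)) :
    Summable fun k : ℕ => ‖P k a / P k c * z ^ k / (k.factorial : ℂ)‖ := by
  apply summable_of_ratio_norm_eventually_le (r := 1/2) (by norm_num)
  obtain ⟨N, hN⟩ := exists_nat_ge (max (max ‖a‖ (2 * ‖c‖)) (8 * ‖z‖ + 1))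
  filter_upwards [Filter.eventually_ge_atTop N] with k hk
  have hkN : (N : ℝ) ≤ (k : ℝ) := by exact_mod_cast hk
  have ha : ‖a‖ ≤ (k : ℝ) := le_trans (le_trans (le_max_left _ _) (le_max_left _ _)) (hN.trans hkN)
  have hcc : 2 * ‖c‖ ≤ (k : ℝ) :=
    le_trans (le_trans (le_max_right _ _) (le_max_left _ _)) (hN.trans hkN)
  have hz : 8 * ‖z‖ + 1 ≤ (k : ℝ) := le_trans (le_max_right _ _) (hN.trans hkN)
  have hk1 : (1 : ℝ) ≤ (k : ℝ) := by nlinarith [norm_nonneg z]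
  have hck : c + (k : ℂ) ≠ 0 := by
    intro h
    exact hc k (by linear_combination h)
  have hk0 : ((k : ℂ) + 1) ≠ 0 := by
    intro h
    have : ((k : ℝ) + 1) = 0 := by exact_mod_cast congrArg Complex.re h
    nlinarith
  have hfj : ((k.factorial : ℕ) : ℂ) ≠ 0 := Nat.cast_ne_zero.mpr k.factorial_ne_zero
  have hrel : P (k+1) a / P (k+1) c * z ^ (k+1) / ((k+1).factorial : ℂ)
      = (P k a / P k c * z ^ k / (k.factorial : ℂ)) * ((a + k) * z / ((c + k) * ((k : ℂ) + 1))) := by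
    rw [P_succ, P_succ, Nat.factorial_succ]
    push_cast
    field_simp
    ring
  rw [norm_norm, norm_norm, hrel, norm_mul]
  have hw : ‖(a + (k : ℂ)) * z / ((c + k) * ((k : ℂ) + 1))‖ ≤ 1/2 := by
    rw [norm_div, norm_mul, norm_mul]
    have hnk : ‖((k : ℕ) : ℂ)‖ = (k : ℝ) := by
      rw [Complex.norm_natCast]
    have h1 : ‖a + (k : ℂ)‖ ≤ 2 * (k : ℝ) := by
      calc ‖a + (k : ℂ)‖ ≤ ‖a‖ + ‖((k : ℕ) : ℂ)‖ := norm_add_le _ _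
        _ ≤ (k : ℝ) + (k : ℝ) := by rw [hnk]; linarith
        _ = 2 * k := by ring
    have h2 : (k : ℝ) - ‖c‖ ≤ ‖c + (k : ℂ)‖ := by
      have h := norm_sub_norm_le (((k : ℕ) : ℂ)) (-c)
      simp only [norm_neg, sub_neg_eq_add] at h
      rw [hnk, show ((k : ℕ) : ℂ) + c = c + (k : ℂ) by ring] at h
      linarith
    have h2' : (k : ℝ)/2 ≤ ‖c + (k : ℂ)‖ := by linarith
    have h3 : ‖((k : ℂ) + 1)‖ = (k : ℝ) + 1 := by
      rw [show ((k : ℂ) + 1) = (((k + 1 : ℕ) : ℂ)) by push_cast; ring, Complex.norm_natCast]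
      push_cast; ring
    rw [h3]
    have hpos : (0:ℝ) < ‖c + (k : ℂ)‖ := by linarith
    rw [div_le_iff₀ (mul_pos hpos (by positivity))]
    have hzb : ‖z‖ ≤ ((k : ℝ) - 1)/8 := by linarith
    nlinarith [norm_nonneg z, norm_nonneg (a + (k : ℂ)), norm_nonneg (c + (k : ℂ)),
      mul_le_mul h1 hzb (norm_nonneg z) (by positivity : (0:ℝ) ≤ 2 * (k:ℝ))]
  calc ‖P k a / P k c * z ^ k / (k.factorial : ℂ)‖ * ‖(a + (k:ℂ)) * z / ((c + k) * ((k : ℂ) + 1))‖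
      ≤ ‖P k a / P k c * z ^ k / (k.factorial : ℂ)‖ * (1/2) :=
        mul_le_mul_of_nonneg_left hw (norm_nonneg _)
    _ = 1/2 * ‖P k a / P k c * z ^ k / (k.factorial : ℂ)‖ := by ring

lemma oneF1_eq (a c z : ℂ) :
    oneF1 a c z = ∑' k : ℕ, P k a / P k c * z ^ k / (k.factorial : ℂ) := rfl

/-- Kummer's transformation: `₁F₁(a; c; z) = e^z ₁F₁(c-a; c; -z)` when `c` is not
a nonpositive integer. -/
theorem kummer_transformation (a c z : ℂ) (hc : ∀ n : ℕ, c ≠ -(n : ℂ)) :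
    oneF1 a c z = Complex.exp z * oneF1 (c - a) c (-z) := by
  have hPc : ∀ k, P k c ≠ 0 := by
    intro k h
    obtain ⟨m, _, hme⟩ := (ascPochhammer_eval_eq_zero_iff k c).mp h
    exact hc m (by linear_combination hme)
  have hexp : Complex.exp z = ∑' n : ℕ, z ^ n / (n.factorial : ℂ) := by
    rw [Complex.exp_eq_exp_ℂ, NormedSpace.exp_eq_tsum_div]
  have hf : Summable fun n : ℕ => ‖z ^ n / (n.factorial : ℂ)‖ := by
    refine (Real.summable_pow_div_factorial ‖z‖).congr fun n => ?_
    rw [norm_div, norm_pow, Complex.norm_natCast]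
  have hg : Summable fun k : ℕ =>
      ‖P k (c - a) / P k c * (-z) ^ k / (k.factorial : ℂ)‖ :=
    summable_norm_term (c - a) c (-z) hPc hc
  rw [oneF1_eq, oneF1_eq, hexp,
    tsum_mul_tsum_eq_tsum_sum_antidiagonal_of_summable_norm hf hg]
  refine tsum_congr fun n => ?_
  rw [Finset.Nat.sum_antidiagonal_eq_sum_range_succ_mk]
  exact (key_sum_s7 a c z hPc n).symm
end

section
/- Double-sum rearrangement with {}_1F_1: for nonnegative integers n, i, α with n + i ≥ 2 and reals μ, x, Σ_{l=0}^∞ Σ_{k=0}^∞ μ^{l+k} x^k / (k! (α+1)_{l+k}) · (-l)_{n+i-2}/(1)_{n+i-2} = ((-1)^{n+i} μ^{n+i-2} α! / (n+i+α-2)!) · Σ_{k=0}^∞ (xμ)^k / (k! (n+i+α-1)_k) · {}_1F_1(n+i-1; n+α+i+k-1; μ). -/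
/-- Evaluation of the Pochhammer symbol `(x)_m` over `ℝ`. -/
noncomputable def ascEval (m : ℕ) (x : ℝ) : ℝ := (ascPochhammer ℝ m).eval x

/-- The confluent hypergeometric function `₁F₁(a; c; z)` over `ℝ`. -/
noncomputable def oneF1R (a c z : ℝ) : ℝ :=
  ∑' m : ℕ, (ascEval m a / ascEval m c) * z ^ m / (Nat.factorial m : ℝ)

lemma ascEval_nat (m c : ℕ) : ascEval m (c : ℝ) = (c.ascFactorial m : ℝ) := by
  rw [ascEval, ← ascPochhammer_eval_cast, ascPochhammer_nat_eq_ascFactorial]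

lemma ascFactorial_split (c p q : ℕ) :
    c.ascFactorial (p + q) = c.ascFactorial p * (c + p).ascFactorial q := by
  have h := congrArg (Polynomial.eval (c : ℕ)) (ascPochhammer_mul ℕ p q)
  simpa [Polynomial.eval_mul, Polynomial.eval_comp, ascPochhammer_nat_eq_ascFactorial] using h.symm

lemma ascEval_neg_shift (N j : ℕ) :
    ascEval N (-((N + j : ℕ) : ℝ)) = (-1) ^ N * ((j + 1).ascFactorial N : ℝ) := by
  rw [ascEval, ascPochhammer_eval_neg_eq_descPochhammer, descPochhammer_eval_eq_descFactorial,
    Nat.add_comm N j, Nat.add_descFactorial_eq_ascFactorial]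

lemma ascFactorial_le (α M : ℕ) : M.factorial ≤ (α + 1).ascFactorial M := by
  have h1 : M.factorial * α.factorial ≤ (M + α).factorial :=
    Nat.le_of_dvd (Nat.factorial_pos _) (Nat.factorial_mul_factorial_dvd_factorial_add M α)
  have h2 : α.factorial * (α + 1).ascFactorial M = (α + M).factorial :=
    Nat.factorial_mul_ascFactorial α M
  have := α.factorial_pos
  nlinarith [Nat.add_comm M α ▸ h1]

/-- The common double-sum term. -/
noncomputable def G (N α : ℕ) (μ x : ℝ) (k j : ℕ) : ℝ :=
  (-1 : ℝ) ^ N * (μ ^ (N + j + k) * x ^ k * ((N + 1).ascFactorial j : ℝ) /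
    ((Nat.factorial k : ℝ) * (Nat.factorial j : ℝ) * ((α + 1).ascFactorial (N + j + k) : ℝ)))

lemma summable_G (N α : ℕ) (μ x : ℝ) : Summable (Function.uncurry (G N α μ x)) := by
  rw [← summable_abs_iff]
  have hB : Summable (fun p : ℕ × ℕ =>
      (|μ| ^ N / (N.factorial : ℝ)) *
        (((|x| * |μ|) ^ p.1 / (p.1.factorial : ℝ)) * (|μ| ^ p.2 / (p.2.factorial : ℝ)))) := by
    exact (((Real.summable_pow_div_factorial (|x| * |μ|)).mul_of_nonneg
      (Real.summable_pow_div_factorial |μ|)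
      (fun k => by positivity) (fun j => by positivity))).mul_left _
  refine hB.of_nonneg_of_le (fun p => abs_nonneg _) ?_
  rintro ⟨k, j⟩
  set C : ℕ := (N + 1).ascFactorial j with hC
  set Q : ℕ := (α + 1).ascFactorial (N + j + k) with hQdef
  have hCpos : (0 : ℝ) < (C : ℝ) := by exact_mod_cast Nat.ascFactorial_pos N j
  have hQpos : (0 : ℝ) < (Q : ℝ) := by exact_mod_cast Nat.ascFactorial_pos α (N + j + k)
  have hkpos : (0 : ℝ) < (k.factorial : ℝ) := by exact_mod_cast k.factorial_pos
  have hjpos : (0 : ℝ) < (j.factorial : ℝ) := by exact_mod_cast j.factorial_pos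
  have hNpos : (0 : ℝ) < (N.factorial : ℝ) := by exact_mod_cast N.factorial_pos
  have key : (C : ℝ) * ((N.factorial : ℝ) * (k.factorial : ℝ)) ≤ (Q : ℝ) := by
    have k1 : N.factorial * C = (N + j).factorial := Nat.factorial_mul_ascFactorial N j
    have k2 : (N + j).factorial * k.factorial ≤ (N + j + k).factorial :=
      Nat.le_of_dvd (Nat.factorial_pos _)
        (Nat.factorial_mul_factorial_dvd_factorial_add (N + j) k)
    have k3 : (N + j + k).factorial ≤ Q := ascFactorial_le α (N + j + k)
    have : C * (N.factorial * k.factorial) ≤ Q := by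
      calc C * (N.factorial * k.factorial) = (N.factorial * C) * k.factorial := by ring
        _ = (N + j).factorial * k.factorial := by rw [k1]
        _ ≤ (N + j + k).factorial := k2
        _ ≤ Q := k3
    exact_mod_cast this
  have habs : |Function.uncurry (G N α μ x) (k, j)| =
      |μ| ^ (N + j + k) * |x| ^ k * (C : ℝ) /
        ((k.factorial : ℝ) * (j.factorial : ℝ) * (Q : ℝ)) := by
    simp only [Function.uncurry, G, abs_mul, abs_div, abs_pow, abs_neg, abs_one, one_pow,
      one_mul]
    rw [Nat.abs_cast C, Nat.abs_cast, Nat.abs_cast, Nat.abs_cast]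
  rw [habs]
  have num_nonneg : (0 : ℝ) ≤ |μ| ^ (N + j + k) * |x| ^ k := by positivity
  calc |μ| ^ (N + j + k) * |x| ^ k * (C : ℝ) /
        ((k.factorial : ℝ) * (j.factorial : ℝ) * (Q : ℝ))
      ≤ |μ| ^ (N + j + k) * |x| ^ k * (C : ℝ) /
        ((k.factorial : ℝ) * (j.factorial : ℝ) *
          ((C : ℝ) * ((N.factorial : ℝ) * (k.factorial : ℝ)))) := by
        gcongr
    _ = |μ| ^ (N + j + k) * |x| ^ k /
        ((k.factorial : ℝ) * (j.factorial : ℝ) * (N.factorial : ℝ) * (k.factorial : ℝ)) := by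
        field_simp
    _ ≤ |μ| ^ (N + j + k) * |x| ^ k /
        ((k.factorial : ℝ) * (j.factorial : ℝ) * (N.factorial : ℝ) * 1) := by
        gcongr
        exact_mod_cast k.factorial_pos
    _ = |μ| ^ N / (N.factorial : ℝ) *
        ((|x| * |μ|) ^ k / (k.factorial : ℝ) * (|μ| ^ j / (j.factorial : ℝ))) := by
        rw [pow_add, pow_add, mul_pow]
        field_simp

lemma lhs_eq (N α : ℕ) (μ x : ℝ) :
    (∑' l : ℕ, ∑' k : ℕ,
        μ ^ (l + k) * x ^ k / ((Nat.factorial k : ℝ) * ascEval (l + k) ((α : ℝ) + 1)) *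
          (ascEval N (-(l : ℝ)) / ascEval N 1)) =
    ∑' j : ℕ, ∑' k : ℕ, G N α μ x k j := by
  have hinj : Function.Injective (fun j : ℕ => N + j) := fun a b hab => by
    simpa using hab
  have hsupp : Function.support (fun l : ℕ => ∑' k : ℕ,
      μ ^ (l + k) * x ^ k / ((Nat.factorial k : ℝ) * ascEval (l + k) ((α : ℝ) + 1)) *
        (ascEval N (-(l : ℝ)) / ascEval N 1)) ⊆ Set.range (fun j : ℕ => N + j) := by
    intro l hl
    rcases le_or_gt N l with h | h
    · exact ⟨l - N, by simpa using (Nat.add_sub_cancel' h)⟩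
    · exfalso
      apply hl
      have h0 : ascEval N (-(l : ℝ)) = 0 := ascPochhammer_eval_neg_coe_nat_of_lt h
      simp [h0]
  rw [← Function.Injective.tsum_eq hinj hsupp]
  refine tsum_congr fun j => tsum_congr fun k => ?_
  have hα : (α : ℝ) + 1 = ((α + 1 : ℕ) : ℝ) := by push_cast; ring
  have h1 : ascEval N (1 : ℝ) = (N.factorial : ℝ) := ascPochhammer_eval_one ℝ N
  rw [hα, ascEval_nat, ascEval_neg_shift, h1, G]
  have hBC : ((j.factorial * (j + 1).ascFactorial N : ℕ) : ℝ) =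
      ((N.factorial * (N + 1).ascFactorial j : ℕ) : ℝ) := by
    norm_cast
    rw [Nat.factorial_mul_ascFactorial, Nat.factorial_mul_ascFactorial, Nat.add_comm]
  push_cast at hBC
  have hQpos : (0 : ℝ) < (((α + 1).ascFactorial (N + j + k) : ℕ) : ℝ) := by
    exact_mod_cast Nat.ascFactorial_pos α (N + j + k)
  have hkpos : (0 : ℝ) < (k.factorial : ℝ) := by exact_mod_cast k.factorial_pos
  have hjpos : (0 : ℝ) < (j.factorial : ℝ) := by exact_mod_cast j.factorial_pos
  have hNpos : (0 : ℝ) < (N.factorial : ℝ) := by exact_mod_cast N.factorial_pos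
  field_simp
  linear_combination (μ ^ N * μ ^ j * μ ^ k * x ^ k) * hBC

lemma rhs_eq (N α : ℕ) (μ x : ℝ) :
    ((-1 : ℝ) ^ N * μ ^ N * (Nat.factorial α : ℝ) / (Nat.factorial (N + α) : ℝ)) *
      (∑' k : ℕ, (x * μ) ^ k / ((Nat.factorial k : ℝ) * ascEval k (((N + α + 1 : ℕ)) : ℝ)) *
        oneF1R (((N + 1 : ℕ)) : ℝ) (((N + α + k + 1 : ℕ)) : ℝ) μ) =
    ∑' k : ℕ, ∑' j : ℕ, G N α μ x k j := by
  rw [← tsum_mul_left]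
  refine tsum_congr fun k => ?_
  rw [oneF1R]
  have hpull : ∀ (a b : ℝ) (f : ℕ → ℝ), a * (b * ∑' m, f m) = ∑' m, a * (b * f m) := by
    intro a b f
    rw [tsum_mul_left, tsum_mul_left]
  rw [hpull]
  refine tsum_congr fun j => ?_
  have e1 : (α + 1).ascFactorial (N + j + k) =
      (α + 1).ascFactorial (N + k) * ((α + 1 + (N + k)).ascFactorial j) := by
    rw [show N + j + k = (N + k) + j by omega, ascFactorial_split]
  have e2 : (α + 1).ascFactorial (N + k) =
      (α + 1).ascFactorial N * ((α + 1 + N).ascFactorial k) := ascFactorial_split _ N k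
  have e3 : α.factorial * (α + 1).ascFactorial N = (N + α).factorial := by
    rw [Nat.factorial_mul_ascFactorial, Nat.add_comm]
  have hQ : α.factorial * (α + 1).ascFactorial (N + j + k) =
      (N + α).factorial * ((N + α + 1).ascFactorial k * ((N + α + k + 1).ascFactorial j)) := by
    rw [e1, e2, show α + 1 + N = N + α + 1 by omega, show α + 1 + (N + k) = N + α + k + 1 by omega,
      ← e3]
    ring
  have hQR : (α.factorial : ℝ) * ((α + 1).ascFactorial (N + j + k) : ℝ) =
      ((N + α).factorial : ℝ) * (((N + α + 1).ascFactorial k : ℝ) *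
        (((N + α + k + 1).ascFactorial j : ℝ))) := by exact_mod_cast congrArg Nat.cast hQ
  rw [ascEval_nat, ascEval_nat, ascEval_nat, G]
  have p1 : (0 : ℝ) < (((N + α + 1).ascFactorial k : ℕ) : ℝ) := by
    exact_mod_cast Nat.ascFactorial_pos (N + α) k
  have p2 : (0 : ℝ) < (((N + α + k + 1).ascFactorial j : ℕ) : ℝ) := by
    exact_mod_cast Nat.ascFactorial_pos (N + α + k) j
  have p3 : (0 : ℝ) < (((α + 1).ascFactorial (N + j + k) : ℕ) : ℝ) := by
    exact_mod_cast Nat.ascFactorial_pos α (N + j + k)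
  have p4 : (0 : ℝ) < (((N + 1).ascFactorial j : ℕ) : ℝ) := by
    exact_mod_cast Nat.ascFactorial_pos N j
  have hkpos : (0 : ℝ) < (k.factorial : ℝ) := by exact_mod_cast k.factorial_pos
  have hjpos : (0 : ℝ) < (j.factorial : ℝ) := by exact_mod_cast j.factorial_pos
  have hNpos : (0 : ℝ) < ((N + α).factorial : ℝ) := by exact_mod_cast (N + α).factorial_pos
  have hapos : (0 : ℝ) < (α.factorial : ℝ) := by exact_mod_cast α.factorial_pos
  field_simp
  linear_combination (μ ^ N * μ ^ k * μ ^ j * x ^ k) * hQR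

/-- Double-sum rearrangement:
`Σ_l Σ_k μ^{l+k} x^k/(k! (α+1)_{l+k}) (-l)_{n+i-2}/(1)_{n+i-2}
 = ((-1)^{n+i} μ^{n+i-2} α!/(n+i+α-2)!) Σ_k (xμ)^k/(k! (n+i+α-1)_k) ₁F₁(n+i-1; n+α+i+k-1; μ)`. -/
theorem double_sum_rearrangement (n i α : ℕ) (h : 2 ≤ n + i) (μ x : ℝ) :
    (∑' l : ℕ, ∑' k : ℕ,
        μ ^ (l + k) * x ^ k / ((Nat.factorial k : ℝ) * ascEval (l + k) ((α : ℝ) + 1)) *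
          (ascEval (n + i - 2) (-(l : ℝ)) / ascEval (n + i - 2) 1)) =
      ((-1 : ℝ) ^ (n + i) * μ ^ (n + i - 2) * (Nat.factorial α : ℝ) /
          (Nat.factorial (n + i + α - 2) : ℝ)) *
        ∑' k : ℕ,
          (x * μ) ^ k / ((Nat.factorial k : ℝ) * ascEval k ((n : ℝ) + i + α - 1)) *
            oneF1R ((n : ℝ) + i - 1) ((n : ℝ) + α + i + k - 1) μ := by
  obtain ⟨N, hN⟩ : ∃ N, n + i = N + 2 := ⟨n + i - 2, by omega⟩
  have hc : (n : ℝ) + i = (N : ℝ) + 2 := by exact_mod_cast congrArg (Nat.cast (R := ℝ)) hN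
  have h2 : n + i - 2 = N := by omega
  have h3 : n + i + α - 2 = N + α := by omega
  have hsign : (-1 : ℝ) ^ (n + i) = (-1 : ℝ) ^ N := by rw [hN, pow_add]; norm_num
  have ha1 : (n : ℝ) + i + α - 1 = ((N + α + 1 : ℕ) : ℝ) := by push_cast; linarith
  have ha3 : (n : ℝ) + i - 1 = ((N + 1 : ℕ) : ℝ) := by push_cast; linarith
  have ha2 : ∀ k : ℕ, (n : ℝ) + α + i + (k : ℝ) - 1 = ((N + α + k + 1 : ℕ) : ℝ) := fun k => by
    push_cast; linarith
  simp only [h2, h3, hsign, ha1, ha3, ha2]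
  rw [lhs_eq N α μ x, rhs_eq N α μ x]
  exact Summable.tsum_comm (summable_G N α μ x)
end
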